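/- Let D ≥ 2, λ > 0, and let ℝ^p be partitioned into J groups. For each group j ∈ {1,…,J}, let ω_j : ℝ → ℝ^{p_j} and γ_{j,1}, …, γ_{j,D−1} : ℝ → ℝ be differentiable curves and g_j : ℝ → ℝ^{p_j} any curve satisfying the gradient flow equations ω_j'(t) = −((∏_{d=1}^{D−1} γ_{j,d}(t))·g_j(t) + (2λ/D)·ω_j(t)) and γ_{j,d}'(t) = −((∏_{d'≠d} γ_{j,d'}(t))·⟨ω_j(t), g_j(t)⟩ + (2λ/D)·γ_{j,d}(t)) for each d. For group j define the squared factors a_{j,1}(t) = ‖ω_j(t)‖₂², a_{j,d+1}(t) = γ_{j,d}(t)² (d ∈ {1,…,D−1}), the effective group weight w_j(t) = (∏_{d=1}^{D−1} γ_{j,d}(t))·ω_j(t), and the group misalignment M_j(t) = (1/D)·Σ_{d=1}^{D} a_{j,d}(t) − ‖w_j(t)‖₂^{2/D}. Let I_max(0) = max_{j} (max_{d} a_{j,d}(0) − min_{d} a_{j,d}(0)). Then for all t ≥ 0, 0 ≤ Σ_{j=1}^{J} M_j(t) ≤ J·I_max(0)·exp(−(4λ/D)·t); equivalently, the difference between the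 D-gated objective and the L_{2,2/D}-regularized objective evaluated along the trajectory, which equals λ·Σ_j M_j(t), is bounded by λ·J·I_max(0)·exp(−(4λ/D)·t). -/

import Mathlib

open RealInnerProductSpace

lemma decay_of_hasDerivAt (c : ℝ) (f : ℝ → ℝ)
    (hf : ∀ t, HasDerivAt f (-c * f t) t) (t : ℝ) :
    f t = f 0 * Real.exp (-c * t) := by
  have key : ∀ s : ℝ, HasDerivAt (fun u => f u * Real.exp (c * u)) 0 s := by
    intro s
    have h1 : HasDerivAt (fun u : ℝ => Real.exp (c * u)) (Real.exp (c * s) * c) s := by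
      simpa using ((hasDerivAt_id s).const_mul c).exp
    have h2 := (hf s).mul h1
    refine h2.congr_deriv ?_
    ring
  have hconst : f t * Real.exp (c * t) = f 0 * Real.exp (c * 0) :=
    is_const_of_deriv_eq_zero (fun x => (key x).differentiableAt)
      (fun x => (key x).deriv) t 0
  rw [mul_zero, Real.exp_zero, mul_one] at hconst
  calc f t = f t * Real.exp (c * t) * Real.exp (-c * t) := by
        rw [mul_assoc, ← Real.exp_add]; ring_nf; simp
    _ = f 0 * Real.exp (-c * t) := by rw [hconst]

lemma gm_le_am {m : ℕ} (hm : 1 ≤ m) (z : Fin m → ℝ) (hz : ∀ i, 0 ≤ z i) :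
    (∏ i, z i) ^ ((m : ℝ)⁻¹) ≤ (1 / (m : ℝ)) * ∑ i, z i := by
  have hm0 : (m : ℝ) ≠ 0 := Nat.cast_ne_zero.mpr (by omega)
  have hw : ∑ _i : Fin m, (m : ℝ)⁻¹ = 1 := by
    simp [Finset.sum_const]
    field_simp
  have h := Real.geom_mean_le_arith_mean_weighted Finset.univ (fun _ => (m : ℝ)⁻¹) z
    (fun i _ => by positivity) hw (fun i _ => hz i)
  rw [Real.finset_prod_rpow _ _ (fun i _ => hz i)] at h
  calc (∏ i, z i) ^ ((m : ℝ)⁻¹) ≤ ∑ i, (m : ℝ)⁻¹ * z i := h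
    _ = (1 / (m : ℝ)) * ∑ i, z i := by rw [← Finset.mul_sum, one_div]

lemma min_le_gm {m : ℕ} (hm : 1 ≤ m) (z : Fin m → ℝ) (mn : ℝ)
    (hmn0 : 0 ≤ mn) (hmn : ∀ i, mn ≤ z i) : mn ≤ (∏ i, z i) ^ ((m : ℝ)⁻¹) := by
  have hm0 : (m : ℝ) ≠ 0 := Nat.cast_ne_zero.mpr (by omega)
  have h1 : mn ^ m ≤ ∏ i, z i := by
    calc mn ^ m = ∏ _i : Fin m, mn := by simp [Finset.prod_const]
      _ ≤ ∏ i, z i := Finset.prod_le_prod (fun i _ => hmn0) (fun i _ => hmn i)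
  have h2 : ((mn ^ m : ℝ)) ^ ((m : ℝ)⁻¹) ≤ (∏ i, z i) ^ ((m : ℝ)⁻¹) :=
    Real.rpow_le_rpow (by positivity) h1 (by positivity)
  rwa [← Real.rpow_natCast mn m, ← Real.rpow_mul hmn0, mul_inv_cancel₀ hm0,
    Real.rpow_one] at h2

theorem stmt_12 (D J : ℕ) (hD : 2 ≤ D) (hJ : 1 ≤ J) (p : Fin J → ℕ)
    (lam : ℝ) (hlam : 0 < lam)
    (ω : (j : Fin J) → ℝ → EuclideanSpace ℝ (Fin (p j)))
    (γ : Fin J → Fin (D - 1) → ℝ → ℝ)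
    (g : (j : Fin J) → ℝ → EuclideanSpace ℝ (Fin (p j)))
    (hω : ∀ (j : Fin J) (t : ℝ), HasDerivAt (ω j)
      (-((∏ d, γ j d t) • g j t + (2 * lam / (D : ℝ)) • ω j t)) t)
    (hγ : ∀ (j : Fin J) (d : Fin (D - 1)) (t : ℝ), HasDerivAt (γ j d)
      (-((∏ d' ∈ Finset.univ.erase d, γ j d' t) * ⟪ω j t, g j t⟫ +
          (2 * lam / (D : ℝ)) * γ j d t)) t)
    -- the squared factors `a_{j,1} = ‖ω_j‖₂²`, `a_{j,d+1} = γ_{j,d}²`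
    (a : Fin J → Fin D → ℝ → ℝ)
    (ha0 : ∀ (j : Fin J) (t : ℝ), a j ⟨0, by omega⟩ t = ‖ω j t‖ ^ 2)
    (haS : ∀ (j : Fin J) (d : Fin (D - 1)) (t : ℝ),
      a j ⟨d.val + 1, by have := d.isLt; omega⟩ t = γ j d t ^ 2)
    -- the group misalignments `M_j`
    (M : Fin J → ℝ → ℝ)
    (hM : ∀ (j : Fin J) (t : ℝ), M j t =
      (1 / (D : ℝ)) * (∑ d : Fin D, a j d t) -
        ‖(∏ d, γ j d t) • ω j t‖ ^ ((2 : ℝ) / (D : ℝ)))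
    -- the maximal initial imbalance `I_max(0)`
    (Imax : ℝ)
    (hImax : Imax = Finset.univ.sup' ⟨⟨0, hJ⟩, Finset.mem_univ _⟩ (fun j : Fin J =>
      Finset.univ.sup' ⟨⟨0, by omega⟩, Finset.mem_univ _⟩ (fun d : Fin D => a j d 0) -
        Finset.univ.inf' ⟨⟨0, by omega⟩, Finset.mem_univ _⟩ (fun d : Fin D => a j d 0))) :
    ∀ t : ℝ, 0 ≤ t →
      (0 ≤ ∑ j, M j t ∧
        ∑ j, M j t ≤ (J : ℝ) * Imax * Real.exp (-(4 * lam / (D : ℝ)) * t)) ∧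
      ∀ L₀ : ((j : Fin J) → EuclideanSpace ℝ (Fin (p j))) → ℝ,
        (L₀ (fun j => (∏ d, γ j d t) • ω j t) +
            (lam / (D : ℝ)) * ((∑ j, ‖ω j t‖ ^ 2) + ∑ j, ∑ d, γ j d t ^ 2)) -
          (L₀ (fun j => (∏ d, γ j d t) • ω j t) +
            lam * ∑ j, ‖(∏ d, γ j d t) • ω j t‖ ^ ((2 : ℝ) / (D : ℝ)))
          ≤ lam * ((J : ℝ) * Imax * Real.exp (-(4 * lam / (D : ℝ)) * t)) := by
  obtain ⟨n, rfl⟩ : ∃ n, D = n + 1 := ⟨D - 1, by omega⟩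
  have hn : 1 ≤ n := by omega
  set k : ℝ := 2 * lam / ((n + 1 : ℕ) : ℝ) with hk
  set c : ℝ := 2 * k with hc
  -- a j 0 as a function
  have ha0' : ∀ (j : Fin J) (h0 : 0 < n + 1), a j ⟨0, h0⟩ = fun t => ‖ω j t‖ ^ 2 := by
    intro j h0
    funext u
    exact ha0 j u
  have haS' : ∀ (j : Fin J) (d : Fin (n + 1 - 1)) (h1 : d.val + 1 < n + 1),
      a j ⟨d.val + 1, h1⟩ = fun t => γ j d t ^ 2 := by
    intro j d h1
    funext u
    exact haS j d u
  -- step A: derivatives of the a's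
  have hderiv : ∀ (j : Fin J) (d : Fin (n + 1)) (s : ℝ),
      HasDerivAt (a j d)
        (-2 * (∏ d', γ j d' s) * ⟪ω j s, g j s⟫ - c * a j d s) s := by
    intro j d s
    obtain ⟨dv, hdv⟩ := d
    cases dv with
    | zero =>
      rw [ha0' j hdv]
      have hfun : (fun t => ‖ω j t‖ ^ 2) = fun t => ⟪ω j t, ω j t⟫ := by
        funext u; rw [real_inner_self_eq_norm_sq]
      rw [hfun]
      have h := HasDerivAt.inner ℝ (hω j s) (hω j s)
      refine h.congr_deriv ?_
      simp only [inner_neg_left, inner_neg_right, inner_add_left, inner_add_right,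
        inner_smul_left, inner_smul_right, RCLike.conj_to_real, real_inner_comm (g j s) (ω j s)]
      rw [hc]
      ring
    | succ m =>
      have hm : m < n + 1 - 1 := by omega
      rw [show (⟨m + 1, hdv⟩ : Fin (n + 1)) = ⟨(⟨m, hm⟩ : Fin (n + 1 - 1)).val + 1, hdv⟩ from rfl,
        haS' j ⟨m, hm⟩ hdv]
      have h := (hγ j ⟨m, hm⟩ s).pow 2
      refine h.congr_deriv ?_
      have he : γ j ⟨m, hm⟩ s * (∏ d' ∈ Finset.univ.erase ⟨m, hm⟩, γ j d' s) =
          ∏ d', γ j d' s :=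
        Finset.mul_prod_erase Finset.univ (fun d' => γ j d' s) (Finset.mem_univ _)
      rw [← he, hc]
      ring
  -- step B: exponential decay of differences
  have hdiff : ∀ (j : Fin J) (d d' : Fin (n + 1)) (t : ℝ),
      a j d t - a j d' t = (a j d 0 - a j d' 0) * Real.exp (-c * t) := by
    intro j d d' t
    apply decay_of_hasDerivAt c (fun u => a j d u - a j d' u)
    intro s
    have h := (hderiv j d s).sub (hderiv j d' s)
    refine h.congr_deriv ?_
    ring
  -- nonnegativity of the a's
  have hanon : ∀ (j : Fin J) (d : Fin (n + 1)) (t : ℝ), 0 ≤ a j d t := by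
    intro j d t
    obtain ⟨dv, hdv⟩ := d
    cases dv with
    | zero => rw [ha0' j hdv]; positivity
    | succ m =>
      have hm : m < n + 1 - 1 := by omega
      rw [show (⟨m + 1, hdv⟩ : Fin (n + 1)) = ⟨(⟨m, hm⟩ : Fin (n + 1 - 1)).val + 1, hdv⟩ from rfl,
        haS' j ⟨m, hm⟩ hdv]
      positivity
  -- GM identity
  have hw2 : ∀ (j : Fin J) (t : ℝ),
      ‖(∏ d', γ j d' t) • ω j t‖ ^ ((2 : ℝ) / ((n + 1 : ℕ) : ℝ)) =
        (∏ d : Fin (n + 1), a j d t) ^ (((n + 1 : ℕ) : ℝ)⁻¹) := by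
    intro j t
    have hprod : ∏ d : Fin (n + 1), a j d t =
        ‖ω j t‖ ^ 2 * ∏ d' : Fin (n + 1 - 1), γ j d' t ^ 2 := by
      rw [Fin.prod_univ_succ]
      congr 1
      · exact ha0 j t
      · rw [show (∏ d' : Fin (n + 1 - 1), γ j d' t ^ 2) = ∏ i : Fin n, γ j i t ^ 2 from rfl]
        refine Finset.prod_congr rfl fun i _ => ?_
        rw [show (Fin.succ i : Fin (n + 1)) =
          ⟨((i : Fin (n + 1 - 1))).val + 1, by omega⟩ from rfl, haS' j i (by omega)]
    rw [hprod, norm_smul, Real.norm_eq_abs, div_eq_mul_inv,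
      Real.rpow_mul (by positivity), Real.rpow_two]
    congr 1
    rw [Finset.prod_pow, mul_pow, sq_abs]
    ring
  -- sum identity
  have hsum : ∀ (j : Fin J) (t : ℝ), ∑ d : Fin (n + 1), a j d t =
      ‖ω j t‖ ^ 2 + ∑ d' : Fin (n + 1 - 1), γ j d' t ^ 2 := by
    intro j t
    rw [Fin.sum_univ_succ]
    congr 1
    · exact ha0 j t
    · rw [show (∑ d' : Fin (n + 1 - 1), γ j d' t ^ 2) = ∑ i : Fin n, γ j i t ^ 2 from rfl]
      refine Finset.sum_congr rfl fun i _ => ?_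
      rw [show (Fin.succ i : Fin (n + 1)) =
        ⟨((i : Fin (n + 1 - 1))).val + 1, by omega⟩ from rfl]
      exact haS j i t
  have hne : (Finset.univ : Finset (Fin (n + 1))).Nonempty := ⟨⟨0, by omega⟩, Finset.mem_univ _⟩
  have hDpos : (0 : ℝ) < ((n + 1 : ℕ) : ℝ) := by positivity
  intro t ht
  have hexp : (0 : ℝ) < Real.exp (-c * t) := Real.exp_pos _
  -- per-group bounds
  have hMb : ∀ j : Fin J, 0 ≤ M j t ∧ M j t ≤ Imax * Real.exp (-c * t) := by
    intro j
    set mx : ℝ := Finset.univ.sup' hne (fun d => a j d t) with hmx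
    set mn : ℝ := Finset.univ.inf' hne (fun d => a j d t) with hmn
    have hmn0 : 0 ≤ mn := by
      obtain ⟨d0, _, hd0⟩ := Finset.exists_mem_eq_inf' hne (fun d => a j d t)
      rw [hmn, hd0]; exact hanon j d0 t
    have hMeq : M j t = (1 / ((n + 1 : ℕ) : ℝ)) * (∑ d : Fin (n + 1), a j d t)
        - (∏ d : Fin (n + 1), a j d t) ^ (((n + 1 : ℕ) : ℝ)⁻¹) := by
      rw [hM j t, hw2 j t]
    constructor
    · rw [hMeq]
      have := gm_le_am (m := n + 1) (by omega) (fun d => a j d t) (fun d => hanon j d t)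
      linarith
    · have h1 : (1 / ((n + 1 : ℕ) : ℝ)) * (∑ d : Fin (n + 1), a j d t) ≤ mx := by
        have hsb : ∑ d : Fin (n + 1), a j d t ≤ ∑ _d : Fin (n + 1), mx :=
          Finset.sum_le_sum fun d _ => Finset.le_sup' (fun d => a j d t) (Finset.mem_univ d)
        rw [Finset.sum_const, Finset.card_univ, Fintype.card_fin, nsmul_eq_mul] at hsb
        calc (1 / ((n + 1 : ℕ) : ℝ)) * (∑ d : Fin (n + 1), a j d t)
            ≤ (1 / ((n + 1 : ℕ) : ℝ)) * (((n + 1 : ℕ) : ℝ) * mx) :=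
              mul_le_mul_of_nonneg_left hsb (by positivity)
          _ = mx := by field_simp
      have h2 : mn ≤ (∏ d : Fin (n + 1), a j d t) ^ (((n + 1 : ℕ) : ℝ)⁻¹) :=
        min_le_gm (by omega) (fun d => a j d t) mn hmn0
          (fun d => Finset.inf'_le (fun d => a j d t) (Finset.mem_univ d))
      have h3 : mx - mn ≤ Imax * Real.exp (-c * t) := by
        obtain ⟨dM, _, hdM⟩ := Finset.exists_mem_eq_sup' hne (fun d => a j d t)
        obtain ⟨dm, _, hdm⟩ := Finset.exists_mem_eq_inf' hne (fun d => a j d t)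
        have hspr : mx - mn = (a j dM 0 - a j dm 0) * Real.exp (-c * t) := by
          rw [hmx, hdM, hmn, hdm]
          exact hdiff j dM dm t
        have hub0 : a j dM 0 - a j dm 0 ≤
            Finset.univ.sup' hne (fun d => a j d 0) -
              Finset.univ.inf' hne (fun d => a j d 0) := by
          have := Finset.le_sup' (fun d => a j d 0) (Finset.mem_univ dM)
          have := Finset.inf'_le (fun d => a j d 0) (Finset.mem_univ dm)
          linarith
        have hImj : Finset.univ.sup' hne (fun d => a j d 0) -
            Finset.univ.inf' hne (fun d => a j d 0) ≤ Imax := by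
          rw [hImax]
          exact Finset.le_sup' (fun j : Fin J =>
            Finset.univ.sup' hne (fun d => a j d 0) -
              Finset.univ.inf' hne (fun d => a j d 0)) (Finset.mem_univ j)
        rw [hspr]
        exact mul_le_mul_of_nonneg_right (le_trans hub0 hImj) hexp.le
      rw [hMeq]
      linarith
  have hcexp : -(4 * lam / ((n + 1 : ℕ) : ℝ)) * t = -c * t := by
    rw [hc, hk]; ring
  have hub : ∑ j, M j t ≤ (↑J : ℝ) * Imax * Real.exp (-(4 * lam / ((n + 1 : ℕ) : ℝ)) * t) := by
    rw [hcexp]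
    calc ∑ j, M j t ≤ ∑ _j : Fin J, Imax * Real.exp (-c * t) :=
          Finset.sum_le_sum fun j _ => (hMb j).2
      _ = (↑J : ℝ) * Imax * Real.exp (-c * t) := by
          rw [Finset.sum_const, Finset.card_univ, Fintype.card_fin, nsmul_eq_mul]; ring
  have hlb : 0 ≤ ∑ j, M j t := Finset.sum_nonneg fun j _ => (hMb j).1
  refine ⟨⟨hlb, hub⟩, ?_⟩
  intro L₀
  have hMsum : ∑ j, M j t =
      (1 / ((n + 1 : ℕ) : ℝ)) * ((∑ j, ‖ω j t‖ ^ 2) + ∑ j, ∑ d', γ j d' t ^ 2) -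
        ∑ j, ‖(∏ d', γ j d' t) • ω j t‖ ^ ((2 : ℝ) / ((n + 1 : ℕ) : ℝ)) := by
    have hMre : ∀ j : Fin J, M j t =
        (1 / ((n + 1 : ℕ) : ℝ)) * (‖ω j t‖ ^ 2 + ∑ d', γ j d' t ^ 2) -
          ‖(∏ d', γ j d' t) • ω j t‖ ^ ((2 : ℝ) / ((n + 1 : ℕ) : ℝ)) := by
      intro j; rw [hM j t, hsum j t]
    rw [Finset.sum_congr rfl fun j _ => hMre j, Finset.sum_sub_distrib,
      ← Finset.mul_sum, Finset.sum_add_distrib]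
  have hkey : (L₀ (fun j => (∏ d, γ j d t) • ω j t) +
        (lam / ((n + 1 : ℕ) : ℝ)) * ((∑ j, ‖ω j t‖ ^ 2) + ∑ j, ∑ d, γ j d t ^ 2)) -
      (L₀ (fun j => (∏ d, γ j d t) • ω j t) +
        lam * ∑ j, ‖(∏ d, γ j d t) • ω j t‖ ^ ((2 : ℝ) / ((n + 1 : ℕ) : ℝ)))
      = lam * ∑ j, M j t := by
    rw [hMsum]
    ring
  rw [hkey]
  exact mul_le_mul_of_nonneg_left hub hlam.le
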